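/- For every ε > 0 and every continuous compactly supported function u : ℝ → ℝ, the two-scale transform T_ε preserves the L² norm: ∫_ℝ ∫_{−1/2}^{1/2} ((T_ε u)(x, y))² dy dx = ∫_ℝ (u(x))² dx. (In particular T_ε is a continuous linear operator from L²(ℝ) into L²(ℝ × Y).) -/

import Mathlib

open MeasureTheory intervalIntegral Set Filter

/-- `kEps ε x = ⌊x/ε + 1/2⌋`. -/
noncomputable def kEps (ε x : ℝ) : ℤ := ⌊x / ε + 1 / 2⌋

/-- `cEps ε x = ε · kEps ε x`. -/
noncomputable def cEps (ε x : ℝ) : ℝ := ε * (kEps ε x : ℝ)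

/-- The two-scale transform `(T_ε u)(x, y) = u(c_ε(x) + ε·y)`. -/
noncomputable def twoScale (ε : ℝ) (u : ℝ → ℝ) (x y : ℝ) : ℝ := u (cEps ε x + ε * y)

/-- The two-scale transform preserves the L² norm on continuous compactly
supported functions. -/
theorem twoScale_isometry (ε : ℝ) (hε : 0 < ε) (u : ℝ → ℝ)
    (hu : Continuous u) (hsupp : HasCompactSupport u) :
    ∫ x : ℝ, ∫ y in (-(1:ℝ)/2)..(1/2), (twoScale ε u x y) ^ 2 =
      ∫ x : ℝ, (u x) ^ 2 := by
  set F : ℝ → ℝ := fun t => u t ^ 2 with hFdef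
  have hFc : Continuous F := hu.pow 2
  have hFsupp : HasCompactSupport F := by
    have : HasCompactSupport ((fun t : ℝ => t ^ 2) ∘ u) :=
      hsupp.comp_left (by simp)
    exact this
  have hFint : Integrable F := hFc.integrable_of_hasCompactSupport hFsupp
  -- the cells
  set s : ℤ → Set ℝ := fun k => Set.Ico (ε * ((k : ℝ) - 1/2)) (ε * ((k : ℝ) + 1/2)) with hs
  have hmem : ∀ (k : ℤ) (x : ℝ), x ∈ s k ↔ kEps ε x = k := by
    intro k x
    simp only [hs, mem_Ico, kEps, Int.floor_eq_iff]
    constructor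
    · rintro ⟨h1, h2⟩
      constructor
      · have : ((k : ℝ) - 1/2) ≤ x / ε := (le_div_iff₀ hε).mpr (by linarith [mul_comm ε ((k:ℝ) - 1/2) ▸ h1])
        linarith
      · have : x / ε < ((k : ℝ) + 1/2) := (div_lt_iff₀ hε).mpr (by linarith [mul_comm ε ((k:ℝ) + 1/2) ▸ h2])
        push_cast
        linarith
    · rintro ⟨h1, h2⟩
      constructor
      · have h1' : ((k : ℝ) - 1/2) ≤ x / ε := by linarith
        have := (le_div_iff₀ hε).mp h1'
        linarith [mul_comm ((k:ℝ) - 1/2) ε ▸ this]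
      · have h2' : x / ε < ((k : ℝ) + 1/2) := by push_cast at h2; linarith
        have := (div_lt_iff₀ hε).mp h2'
        linarith [mul_comm ((k:ℝ) + 1/2) ε ▸ this]
  have hmeas : ∀ k, MeasurableSet (s k) := fun k => measurableSet_Ico
  have hdisj : Pairwise (Function.onFun Disjoint s) := by
    intro i j hij
    rw [Function.onFun, Set.disjoint_left]
    intro x hxi hxj
    exact hij (((hmem i x).1 hxi).symm.trans ((hmem j x).1 hxj))
  have hUnion : (⋃ k, s k) = Set.univ := by
    ext x
    simp only [mem_iUnion, mem_univ, iff_true]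
    exact ⟨kEps ε x, (hmem _ x).2 rfl⟩
  -- the inner integral
  set g : ℝ → ℝ := fun x => ε⁻¹ * ∫ t in (cEps ε x - ε/2)..(cEps ε x + ε/2), F t with hgdef
  have hinner : ∀ x : ℝ, (∫ y in (-(1:ℝ)/2)..(1/2), (twoScale ε u x y) ^ 2) = g x := by
    intro x
    have h1 : ∀ y : ℝ, (twoScale ε u x y) ^ 2 = F (ε * y + cEps ε x) := by
      intro y; simp [twoScale, hFdef, add_comm]
    have e1 : ε * (-(1:ℝ)/2) + cEps ε x = cEps ε x - ε/2 := by ring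
    have e2 : ε * ((1:ℝ)/2) + cEps ε x = cEps ε x + ε/2 := by ring
    rw [hgdef]
    simp only [h1]
    rw [intervalIntegral.integral_comp_mul_add F hε.ne' (cEps ε x), e1, e2, smul_eq_mul]
  -- continuity of the primitive-based map
  have hΦ : Continuous fun c : ℝ => ε⁻¹ * ∫ t in (c - ε/2)..(c + ε/2), F t := by
    have hprim : Continuous fun b : ℝ => ∫ t in (0:ℝ)..b, F t :=
      hFint.continuous_primitive 0
    have heq : ∀ c : ℝ, (∫ t in (c - ε/2)..(c + ε/2), F t)
        = (∫ t in (0:ℝ)..(c + ε/2), F t) - ∫ t in (0:ℝ)..(c - ε/2), F t := by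
      intro c
      rw [intervalIntegral.integral_interval_sub_left hFint.intervalIntegrable
        hFint.intervalIntegrable]
    simp only [heq]
    exact continuous_const.mul ((hprim.comp (continuous_id.add continuous_const)).sub
      (hprim.comp (continuous_id.sub continuous_const)))
  have hcEps : Measurable (cEps ε) := by
    apply measurable_const.mul
    exact (measurable_from_top (f := (Int.cast : ℤ → ℝ))).comp (((measurable_id.div_const ε).add_const (1/2)).floor)
  have hgm : Measurable g := by
    have : g = (fun c : ℝ => ε⁻¹ * ∫ t in (c - ε/2)..(c + ε/2), F t) ∘ cEps ε := rfl
    rw [this]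
    exact hΦ.measurable.comp hcEps
  -- support bound
  obtain ⟨R, hR⟩ := hFsupp.isCompact.isBounded.subset_closedBall 0
  have hFzero : ∀ t : ℝ, R < |t| → F t = 0 := by
    intro t ht
    by_contra h
    have : t ∈ tsupport F := subset_tsupport F (by simpa using h)
    have := hR this
    simp only [Metric.mem_closedBall, Real.dist_eq, sub_zero] at this
    linarith
  have hcle : ∀ x : ℝ, |cEps ε x - x| ≤ ε / 2 := by
    intro x
    have h1 : (kEps ε x : ℝ) ≤ x / ε + 1/2 := Int.floor_le _
    have h2 : x / ε + 1/2 < (kEps ε x : ℝ) + 1 := Int.lt_floor_add_one _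
    have hxe : ε * (x / ε) = x := by field_simp
    rw [abs_le]
    simp only [cEps]
    constructor <;> nlinarith
  have hgzero : ∀ x : ℝ, R + ε < |x| → g x = 0 := by
    intro x hx
    rw [hgdef]
    have hzero : ∀ t ∈ Set.uIcc (cEps ε x - ε/2) (cEps ε x + ε/2), F t = 0 := by
      intro t ht
      rw [Set.uIcc_of_le (by linarith) ] at ht
      obtain ⟨ht1, ht2⟩ := ht
      apply hFzero
      have h := hcle x
      rw [abs_sub_comm] at h
      have h1 : |x - cEps ε x| ≤ ε/2 := h
      rw [abs_le] at h1
      rw [lt_abs] at hx ⊢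
      rcases hx with hx | hx
      · left; linarith
      · right; linarith
    calc ε⁻¹ * ∫ t in (cEps ε x - ε/2)..(cEps ε x + ε/2), F t
        = ε⁻¹ * ∫ t in (cEps ε x - ε/2)..(cEps ε x + ε/2), (0:ℝ) := by
          rw [intervalIntegral.integral_congr hzero]
      _ = 0 := by simp
  -- integrability of g
  have hgint : Integrable g := by
    set C : ℝ := ε⁻¹ * ∫ t, |F t| with hCdef
    have hC : 0 ≤ C := by
      apply mul_nonneg (by positivity)
      exact integral_nonneg fun t => abs_nonneg _
    have hgbd : ∀ x : ℝ, |g x| ≤ (Set.Icc (-(R+ε)) (R+ε)).indicator (fun _ => C) x := by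
      intro x
      by_cases hx : x ∈ Set.Icc (-(R+ε)) (R+ε)
      · rw [Set.indicator_of_mem hx]
        rw [hgdef]
        rw [abs_mul, abs_inv, abs_of_pos hε]
        apply mul_le_mul_of_nonneg_left _ (by positivity)
        calc |∫ t in (cEps ε x - ε/2)..(cEps ε x + ε/2), F t|
            ≤ ∫ t in (cEps ε x - ε/2)..(cEps ε x + ε/2), |F t| := by
              apply intervalIntegral.abs_integral_le_integral_abs (by linarith)
          _ = ∫ t in Set.Ioc (cEps ε x - ε/2) (cEps ε x + ε/2), |F t| := by
              rw [intervalIntegral.integral_of_le (by linarith)]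
          _ ≤ ∫ t, |F t| := by
              apply setIntegral_le_integral hFint.abs
              filter_upwards with t using abs_nonneg _
      · rw [Set.indicator_of_notMem hx]
        have : R + ε < |x| := by
          simp only [Set.mem_Icc, not_and_or, not_le] at hx
          rcases hx with hx | hx
          · rw [lt_abs]; right; linarith
          · rw [lt_abs]; left; exact hx
        rw [hgzero x this]
        simp
    have hbd_int : Integrable ((Set.Icc (-(R+ε)) (R+ε)).indicator (fun _ => C)) :=
      (integrable_indicator_iff measurableSet_Icc).2 (integrableOn_const measure_Icc_lt_top.ne)
    apply hbd_int.mono' hgm.aestronglyMeasurable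
    filter_upwards with x
    simpa [Real.norm_eq_abs] using hgbd x
  -- main computation
  have hvol : ∀ k : ℤ, (volume (s k)).toReal = ε := by
    intro k
    rw [hs]
    simp only [Real.volume_Ico]
    rw [ENNReal.toReal_ofReal (by nlinarith : (0:ℝ) ≤ ε * ((k:ℝ) + 1/2) - ε * ((k:ℝ) - 1/2))]
    ring
  have hcell : ∀ k : ℤ, (∫ x in s k, g x) = ∫ x in s k, F x := by
    intro k
    have hconst : ∀ x ∈ s k, g x = ε⁻¹ * ∫ t in (ε * (k:ℝ) - ε/2)..(ε * (k:ℝ) + ε/2), F t := by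
      intro x hx
      have : cEps ε x = ε * (k : ℝ) := by
        rw [cEps, (hmem k x).1 hx]
      rw [hgdef]
      simp only [this]
    calc (∫ x in s k, g x)
        = ∫ _x in s k, (ε⁻¹ * ∫ t in (ε * (k:ℝ) - ε/2)..(ε * (k:ℝ) + ε/2), F t) := by
          exact setIntegral_congr_fun (hmeas k) hconst
      _ = (volume (s k)).toReal • (ε⁻¹ * ∫ t in (ε * (k:ℝ) - ε/2)..(ε * (k:ℝ) + ε/2), F t) :=
          setIntegral_const _
      _ = ∫ t in (ε * (k:ℝ) - ε/2)..(ε * (k:ℝ) + ε/2), F t := by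
          rw [hvol k, smul_eq_mul, ← mul_assoc, mul_inv_cancel₀ hε.ne', one_mul]
      _ = ∫ x in Set.Ioc (ε * ((k:ℝ) - 1/2)) (ε * ((k:ℝ) + 1/2)), F x := by
          rw [intervalIntegral.integral_of_le (by nlinarith)]
          congr 1 <;> ring
      _ = ∫ x in s k, F x := by
          rw [hs]
          exact (setIntegral_congr_set Ico_ae_eq_Ioc).symm
  calc (∫ x : ℝ, ∫ y in (-(1:ℝ)/2)..(1/2), (twoScale ε u x y) ^ 2)
      = ∫ x : ℝ, g x := by simp only [hinner]
    _ = ∫ x in (⋃ k, s k), g x := by rw [hUnion, Measure.restrict_univ]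
    _ = ∑' k : ℤ, ∫ x in s k, g x :=
        integral_iUnion hmeas hdisj (by rw [hUnion]; exact hgint.integrableOn)
    _ = ∑' k : ℤ, ∫ x in s k, F x := tsum_congr hcell
    _ = ∫ x in (⋃ k, s k), F x :=
        (integral_iUnion hmeas hdisj (by rw [hUnion]; exact hFint.integrableOn)).symm
    _ = ∫ x : ℝ, F x := by rw [hUnion, Measure.restrict_univ]
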